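/- For every integer k ≥ 0, (k+1)²·C_{2,k} = 4(k+2)²·C_{2,k+2}, where C_{2,k} = (1/2)∫₀^∞∫₀^∞ (cosh x + cosh y)^{-(k+1)} dx dy. -/

import Mathlib

open MeasureTheory Real Set Filter


lemma sech_le (t : ℝ) : (Real.cosh t)⁻¹ ≤ 2 * Real.exp (-t) := by
  rw [Real.cosh_eq, inv_le_iff_one_le_mul₀ (by positivity)]
  have h := Real.exp_pos t
  have h2 := Real.exp_pos (-t)
  have : Real.exp (-t) * Real.exp t = 1 := by rw [← Real.exp_add]; simp
  nlinarith

lemma sechpow_le {n : ℕ} (hn : 1 ≤ n) (t : ℝ) : ((Real.cosh t)^n)⁻¹ ≤ (Real.cosh t)⁻¹ :=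
  inv_anti₀ (Real.cosh_pos t) (le_self_pow₀ (Real.one_le_cosh t) (by omega))

lemma abs_sinh_le_cosh (t : ℝ) : |Real.sinh t| ≤ Real.cosh t := by
  rw [abs_le, Real.sinh_eq, Real.cosh_eq]
  constructor <;> nlinarith [Real.exp_pos t, Real.exp_pos (-t)]

lemma integrableOn_sechpow {n : ℕ} (hn : 1 ≤ n) (a : ℝ) :
    IntegrableOn (fun t => ((Real.cosh t)^n)⁻¹) (Ioi a) := by
  have h : IntegrableOn (fun t => 2 * Real.exp (-1 * t)) (Ioi a) :=
    (exp_neg_integrableOn_Ioi a one_pos).const_mul 2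
  refine h.mono' (Continuous.aestronglyMeasurable
      ((Real.continuous_cosh.pow n).inv₀ (fun t => pow_ne_zero _ (Real.cosh_pos t).ne'))) ?_
  filter_upwards with t
  rw [norm_eq_abs, abs_of_nonneg (by positivity)]
  calc ((Real.cosh t)^n)⁻¹ ≤ (Real.cosh t)⁻¹ := sechpow_le hn t
  _ ≤ 2 * Real.exp (-t) := sech_le t
  _ = 2 * Real.exp (-1 * t) := by norm_num

lemma integrable_sechpow {n : ℕ} (hn : 1 ≤ n) :
    Integrable (fun t => ((Real.cosh t)^n)⁻¹) := by
  have h1 : IntegrableOn (fun t => ((Real.cosh t)^n)⁻¹) (Ioi 0) := integrableOn_sechpow hn 0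
  have h2 : IntegrableOn (fun t => ((Real.cosh t)^n)⁻¹) (Iic 0) := by
    rw [← Measure.map_neg_eq_self (volume : Measure ℝ)]
    have m : MeasurableEmbedding fun x : ℝ => -x := (Homeomorph.neg ℝ).measurableEmbedding
    rw [m.integrableOn_map_iff]
    simp_rw [Function.comp_def, Real.cosh_neg, neg_preimage, neg_Iic, neg_zero]
    exact Iff.mpr integrableOn_Ici_iff_integrableOn_Ioi h1
  rw [← integrableOn_univ, ← Iic_union_Ioi (a := (0:ℝ))]
  exact h2.union h1

lemma tendsto_two_exp_neg : Tendsto (fun t : ℝ => 2 * Real.exp (-t)) atTop (nhds 0) := by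
  have h := Real.tendsto_exp_neg_atTop_nhds_zero.const_mul (2:ℝ)
  simpa using h

lemma sechpow_rec {n : ℕ} (hn : 1 ≤ n) :
    (n:ℝ) * ∫ t in Ioi (0:ℝ), ((Real.cosh t)^n)⁻¹
      = ((n:ℝ)+1) * ∫ t in Ioi (0:ℝ), ((Real.cosh t)^(n+2))⁻¹ := by
  set F : ℝ → ℝ := fun t => Real.sinh t * ((Real.cosh t)^(n+1))⁻¹ with hF
  set F' : ℝ → ℝ := fun t =>
    (-(n:ℝ)) * ((Real.cosh t)^n)⁻¹ + ((n:ℝ)+1) * ((Real.cosh t)^(n+2))⁻¹ with hF'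
  have hderiv : ∀ t : ℝ, HasDerivAt F (F' t) t := by
    intro t
    have hcne : Real.cosh t ≠ 0 := (Real.cosh_pos t).ne'
    have hpne : (Real.cosh t)^(n+1) ≠ 0 := pow_ne_zero _ hcne
    have hp : HasDerivAt (fun t => (Real.cosh t)^(n+1))
        ((n+1 : ℕ) * (Real.cosh t)^n * Real.sinh t) t := by
      simpa using (Real.hasDerivAt_cosh t).fun_pow (n+1)
    have hinv := hp.inv hpne
    have hmul := (Real.hasDerivAt_sinh t).fun_mul hinv
    refine hmul.congr_deriv (Eq.symm ?_)
    set c := Real.cosh t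
    set s := Real.sinh t
    have hs : s ^ 2 = c ^ 2 - 1 := Real.sinh_sq t
    have e1 : c * (c^(n+1))⁻¹ = (c^n)⁻¹ := by
      rw [pow_succ]; field_simp
    have e2 : s * (-((((n:ℕ)+1 : ℕ):ℝ) * c^n * s) / (c^(n+1))^2)
        = -(((n:ℝ)+1) * s^2) * (c^(n+2))⁻¹ := by
      have h2 : (c^(n+1))^2 = c^n * c^(n+2) := by ring
      rw [h2]
      push_cast
      field_simp
    have e3 : c^2 * (c^(n+2))⁻¹ = (c^n)⁻¹ := by
      have h3 : c^(n+2) = c^n * c^2 := by ring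
      rw [h3]
      field_simp
    rw [hF']
    simp only [Pi.inv_apply]
    rw [e1, e2, hs]
    linear_combination ((n:ℝ)+1) * e3
  have hint : IntegrableOn F' (Ioi (0:ℝ)) :=
    ((integrableOn_sechpow hn 0).const_mul _).add
      ((integrableOn_sechpow (by omega) 0).const_mul _)
  have htend : Tendsto F atTop (nhds 0) := by
    apply squeeze_zero_norm (fun t => ?_) tendsto_two_exp_neg
    have h1 : ‖F t‖ ≤ ((Real.cosh t)^n)⁻¹ := by
      rw [hF, norm_eq_abs]
      simp only
      rw [abs_mul, abs_of_nonneg (by positivity : (0:ℝ) ≤ ((Real.cosh t)^(n+1))⁻¹)]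
      have ha := abs_sinh_le_cosh t
      have hcp := Real.cosh_pos t
      rw [pow_succ, mul_inv]
      calc |Real.sinh t| * (((Real.cosh t)^n)⁻¹ * (Real.cosh t)⁻¹)
          ≤ Real.cosh t * (((Real.cosh t)^n)⁻¹ * (Real.cosh t)⁻¹) := by
            apply mul_le_mul_of_nonneg_right ha (by positivity)
        _ = ((Real.cosh t)^n)⁻¹ := by field_simp
    exact h1.trans ((sechpow_le hn t).trans (sech_le t))
  have key := integral_Ioi_of_hasDerivAt_of_tendsto' (fun x _ => hderiv x) hint htend
  have hF0 : F 0 = 0 := by simp [hF]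
  rw [hF0, sub_zero] at key
  rw [hF'] at key
  simp only at key
  rw [integral_add ((integrableOn_sechpow hn 0).const_mul _)
    ((integrableOn_sechpow (by omega) 0).const_mul _), integral_const_mul, integral_const_mul] at key
  linarith


lemma integral_comp_add_right_Ioi' (f : ℝ → ℝ) (a d : ℝ) :
    ∫ x in Ioi a, f (x + d) = ∫ y in Ioi (a + d), f y := by
  have A : MeasurableEmbedding fun x : ℝ => x + d :=
    (Homeomorph.addRight d).measurableEmbedding
  have h := A.setIntegral_map (μ := volume) f (Ioi (a + d))
  rw [show (fun x : ℝ => x + d) = (· + d) from rfl, map_add_right_eq_self (volume : Measure ℝ) d] at h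
  rw [h]
  congr 1
  ext x
  simp [add_lt_add_iff_right]

lemma halfsub (φ : ℝ → ℝ) (x : ℝ) :
    ∫ v in Iio (x/2), φ (x - 2*v) = (2:ℝ)⁻¹ * ∫ y in Ioi (0:ℝ), φ y := by
  rw [← integral_Iic_eq_integral_Iio]
  have h2 := integral_comp_neg_Iic (x/2) (fun w => φ (x + 2*w))
  have e1 : ∀ v : ℝ, φ (x - 2*v) = φ (x + 2*(-v)) := by intro v; ring_nf
  simp_rw [e1]
  rw [h2]
  have h3 := integral_comp_mul_left_Ioi (fun t => φ (x + t)) (-(x/2)) two_pos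
  rw [h3]
  have e2 : 2 * -(x/2) = -x := by ring
  rw [e2, smul_eq_mul]
  congr 1
  have e3 : ∀ t : ℝ, φ (x + t) = φ (t + x) := by intro t; rw [add_comm]
  simp_rw [e3]
  rw [integral_comp_add_right_Ioi' (fun y => φ y) (-x) x]
  norm_num


section
variable {n : ℕ}

lemma cont_sechpow : Continuous (fun t : ℝ => ((Real.cosh t)^n)⁻¹) :=
  (Real.continuous_cosh.pow n).inv₀ (fun t => pow_ne_zero _ (Real.cosh_pos t).ne')

lemma G_nonneg (t : ℝ) : 0 ≤ ∫ w in Ioi t, ((Real.cosh w)^n)⁻¹ :=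
  setIntegral_nonneg measurableSet_Ioi (fun w _ => by positivity)

lemma G_le (hn : 1 ≤ n) (t : ℝ) :
    ∫ w in Ioi t, ((Real.cosh w)^n)⁻¹ ≤ 2 * Real.exp (-t) := by
  have h2 : IntegrableOn (fun w : ℝ => 2 * Real.exp (-w)) (Ioi t) := by
    have := (exp_neg_integrableOn_Ioi t one_pos).const_mul 2
    simp at this; exact this
  calc ∫ w in Ioi t, ((Real.cosh w)^n)⁻¹
      ≤ ∫ w in Ioi t, 2 * Real.exp (-w) := by
        apply setIntegral_mono_on (integrableOn_sechpow hn t) h2 measurableSet_Ioi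
        intro w _
        exact (sechpow_le hn w).trans (sech_le w)
    _ = 2 * Real.exp (-t) := by rw [integral_const_mul, integral_exp_neg_Ioi]

lemma G_tendsto (hn : 1 ≤ n) :
    Tendsto (fun t : ℝ => ∫ w in Ioi t, ((Real.cosh w)^n)⁻¹) atTop (nhds 0) :=
  squeeze_zero G_nonneg (G_le hn) tendsto_two_exp_neg

lemma G_eq (hn : 1 ≤ n) {t : ℝ} (ht : 0 ≤ t) :
    ∫ w in Ioi t, ((Real.cosh w)^n)⁻¹
      = (∫ w in Ioi (0:ℝ), ((Real.cosh w)^n)⁻¹) - ∫ w in (0:ℝ)..t, ((Real.cosh w)^n)⁻¹ := by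
  rw [intervalIntegral.integral_of_le ht]
  have hu : Ioc (0:ℝ) t ∪ Ioi t = Ioi 0 := Ioc_union_Ioi_eq_Ioi ht
  have hsplit : ∫ w in Ioi (0:ℝ), ((Real.cosh w)^n)⁻¹
      = (∫ w in Ioc (0:ℝ) t, ((Real.cosh w)^n)⁻¹) + ∫ w in Ioi t, ((Real.cosh w)^n)⁻¹ := by
    rw [← hu]
    exact setIntegral_union (Ioc_disjoint_Ioi le_rfl) measurableSet_Ioi
      ((integrableOn_sechpow hn 0).mono_set Ioc_subset_Ioi_self)
      ((integrableOn_sechpow hn 0).mono_set (Ioi_subset_Ioi ht))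
  linarith

lemma G_main (hn : 1 ≤ n) :
    ∫ t in Ioi (0:ℝ), ((Real.cosh t)^n)⁻¹ * (∫ w in Ioi t, ((Real.cosh w)^n)⁻¹)
      = (∫ w in Ioi (0:ℝ), ((Real.cosh w)^n)⁻¹)^2 / 2 := by
  set I0 : ℝ := ∫ w in Ioi (0:ℝ), ((Real.cosh w)^n)⁻¹ with hI0
  set Φ : ℝ → ℝ := fun u => ∫ w in (0:ℝ)..u, ((Real.cosh w)^n)⁻¹ with hΦ
  have hΦd : ∀ t : ℝ, HasDerivAt Φ (((Real.cosh t)^n)⁻¹) t := by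
    intro t
    exact intervalIntegral.integral_hasDerivAt_right
      (cont_sechpow.intervalIntegrable 0 t)
      (cont_sechpow.stronglyMeasurableAtFilter volume (nhds t))
      cont_sechpow.continuousAt
  have hΦc : Continuous Φ := by
    rw [continuous_iff_continuousAt]; exact fun t => (hΦd t).continuousAt
  set P : ℝ → ℝ := fun t => -(I0 - Φ t)^2 / 2 with hP
  have hPd : ∀ t : ℝ, HasDerivAt P (((Real.cosh t)^n)⁻¹ * (I0 - Φ t)) t := by
    intro t
    have h1 : HasDerivAt (fun u => I0 - Φ u) (-(((Real.cosh t)^n)⁻¹)) t := by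
      simpa using (hasDerivAt_const t I0).fun_sub (hΦd t)
    have h2 := ((h1.fun_pow 2).neg).div_const 2
    refine h2.congr_deriv (Eq.symm ?_)
    push_cast
    ring
  have hG0 : ∀ t : ℝ, 0 ≤ t → (∫ w in Ioi t, ((Real.cosh w)^n)⁻¹) = I0 - Φ t :=
    fun t ht => G_eq hn ht
  have hint : IntegrableOn (fun t => ((Real.cosh t)^n)⁻¹ * (I0 - Φ t)) (Ioi (0:ℝ)) := by
    refine ((integrableOn_sechpow hn 0).const_mul I0).mono'
      ((cont_sechpow.mul (continuous_const.sub hΦc)).aestronglyMeasurable) ?_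
    filter_upwards [ae_restrict_mem measurableSet_Ioi] with t ht
    rw [norm_eq_abs, abs_mul, abs_of_nonneg (by positivity : (0:ℝ) ≤ ((Real.cosh t)^n)⁻¹)]
    rw [← hG0 t (le_of_lt ht), abs_of_nonneg (G_nonneg t)]
    rw [mul_comm (I0 : ℝ) _]
    have hGle : (∫ w in Ioi t, ((Real.cosh w)^n)⁻¹) ≤ I0 := by
      rw [hI0]
      apply setIntegral_mono_set (integrableOn_sechpow hn 0)
      · filter_upwards with w using by positivity
      · exact HasSubset.Subset.eventuallyLE (Ioi_subset_Ioi (le_of_lt ht))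
    exact mul_le_mul_of_nonneg_left hGle (by positivity)
  have htendP : Tendsto P atTop (nhds 0) := by
    have h1 : Tendsto (fun t => ∫ w in Ioi t, ((Real.cosh w)^n)⁻¹) atTop (nhds 0) := G_tendsto hn
    have h2 : Tendsto (fun t : ℝ => -((∫ w in Ioi t, ((Real.cosh w)^n)⁻¹))^2 / 2) atTop (nhds 0) := by
      have := ((h1.pow 2).neg).div_const 2
      simpa using this
    apply h2.congr'
    filter_upwards [Ici_mem_atTop (0:ℝ)] with t ht
    rw [hP]
    simp only
    rw [hG0 t ht]
  have key := integral_Ioi_of_hasDerivAt_of_tendsto' (fun t _ => hPd t) hint htendP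
  have hP0 : P 0 = -(I0)^2 / 2 := by
    rw [hP]
    simp [hΦ]
  rw [hP0] at key
  have congrg : ∫ t in Ioi (0:ℝ), ((Real.cosh t)^n)⁻¹ * (∫ w in Ioi t, ((Real.cosh w)^n)⁻¹)
      = ∫ t in Ioi (0:ℝ), ((Real.cosh t)^n)⁻¹ * (I0 - Φ t) := by
    apply setIntegral_congr_fun measurableSet_Ioi
    intro t ht
    simp only
    rw [hG0 t (le_of_lt ht)]
  rw [congrg, key]
  ring

end


lemma cosh_pair (x v : ℝ) :
    Real.cosh x + Real.cosh (x - 2*v) = 2 * Real.cosh (x - v) * Real.cosh v := by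
  have h1 := Real.cosh_add (x - v) v
  have h2 := Real.cosh_sub (x - v) v
  have e1 : x - v + v = x := by ring
  have e2 : x - v - v = x - 2*v := by ring
  rw [e1] at h1; rw [e2] at h2
  rw [h1, h2]; ring

lemma double_eq {n : ℕ} (hn : 1 ≤ n) :
    (∫ x in Ioi (0:ℝ), ∫ y in Ioi (0:ℝ), ((Real.cosh x + Real.cosh y)^n)⁻¹)
      = 2 * ((2:ℝ)^n)⁻¹ * (∫ w in Ioi (0:ℝ), ((Real.cosh w)^n)⁻¹)^2 := by
  set ψ : ℝ → ℝ → ℝ := fun x v => 2 * ((2 * Real.cosh (x - v) * Real.cosh v)^n)⁻¹ with hψ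
  set f : ℝ → ℝ → ℝ := fun x v => if 0 < x ∧ 2*v < x then ψ x v else 0 with hf
  have hbase_pos : ∀ x v : ℝ, (0:ℝ) < 2 * Real.cosh (x - v) * Real.cosh v := by
    intro x v
    have := Real.cosh_pos (x - v); have := Real.cosh_pos v; positivity
  -- step 1 : inner integral
  have step1 : ∀ x : ℝ, (∫ y in Ioi (0:ℝ), ((Real.cosh x + Real.cosh y)^n)⁻¹)
      = ∫ v in Iio (x/2), ψ x v := by
    intro x
    have h := halfsub (fun y => ((Real.cosh x + Real.cosh y)^n)⁻¹) x
    have h2 : ∀ v : ℝ, ((Real.cosh x + Real.cosh (x - 2*v))^n)⁻¹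
        = ((2 * Real.cosh (x - v) * Real.cosh v)^n)⁻¹ := by
      intro v; rw [cosh_pair]
    simp only [h2] at h
    rw [hψ]
    simp only
    rw [integral_const_mul, h]
    ring
  -- equal forms of f
  have e_outer : ∀ x : ℝ, (Ioi (0:ℝ)).indicator (fun x' => ∫ v in Iio (x'/2), ψ x' v) x
      = ∫ v, f x v := by
    intro x
    by_cases hx : x ∈ Ioi (0:ℝ)
    · rw [indicator_of_mem hx, ← integral_indicator measurableSet_Iio]
      congr 1 with v
      rw [indicator_apply, hf]
      simp only [mem_Iio]
      have hiff : v < x/2 ↔ 2*v < x := by constructor <;> intro <;> linarith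
      by_cases hv : v < x/2
      · rw [if_pos hv, if_pos ⟨hx, hiff.mp hv⟩]
      · rw [if_neg hv, if_neg (by tauto)]
    · rw [indicator_of_notMem hx]
      symm
      have hx' : ¬ (0 < x) := by simpa using hx
      have hz : ∀ v : ℝ, f x v = 0 := by
        intro v
        rw [hf]
        simp only
        rw [if_neg (fun h => hx' h.1)]
      simp only [hz, integral_zero]
  have e_inner : ∀ v x : ℝ, f x v = (Ioi (max (2*v) 0)).indicator (fun x' => ψ x' v) x := by
    intro v x
    rw [hf, indicator_apply]
    simp only [mem_Ioi, max_lt_iff]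
    by_cases h : 0 < x ∧ 2*v < x
    · rw [if_pos h, if_pos ⟨h.2, h.1⟩]
    · rw [if_neg h, if_neg (by tauto)]
  -- integrability for the swap
  have hTm : MeasurableSet {p : ℝ × ℝ | 0 < p.1 ∧ 2*p.2 < p.1} :=
    (measurableSet_lt measurable_const measurable_fst).inter
      (measurableSet_lt (measurable_snd.const_mul 2) measurable_fst)
  have hcontψ : Continuous (fun p : ℝ × ℝ => ψ p.1 p.2) := by
    rw [hψ]
    apply Continuous.mul continuous_const
    apply Continuous.inv₀
    · exact (Continuous.mul (continuous_const.mul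
        (Real.continuous_cosh.comp (continuous_fst.sub continuous_snd)))
        (Real.continuous_cosh.comp continuous_snd)).pow n
    · intro p
      exact pow_ne_zero _ (hbase_pos p.1 p.2).ne'
  have huf : Function.uncurry f
      = ({p : ℝ × ℝ | 0 < p.1 ∧ 2*p.2 < p.1}).indicator (fun p => ψ p.1 p.2) := by
    funext p
    simp only [Function.uncurry, hf, indicator_apply, Set.mem_setOf_eq]
  have hIf : Integrable (Function.uncurry f) (volume.prod volume) := by
    have hg1 : Integrable ((Ioi (0:ℝ)).indicator (fun x => 4 * Real.exp (-2⁻¹ * x))) := by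
      rw [integrable_indicator_iff measurableSet_Ioi]
      exact (exp_neg_integrableOn_Ioi 0 (by norm_num)).const_mul 4
    have hg2 : Integrable (fun v : ℝ => (Real.cosh v)⁻¹) := by
      simpa using integrable_sechpow (n := 1) le_rfl
    have hg : Integrable (fun p : ℝ × ℝ =>
        ((Ioi (0:ℝ)).indicator (fun x => 4 * Real.exp (-2⁻¹ * x)) p.1) * (Real.cosh p.2)⁻¹)
        (volume.prod volume) := hg1.mul_prod hg2
    refine hg.mono' ?_ ?_
    · rw [huf]
      exact (hcontψ.measurable.indicator hTm).aestronglyMeasurable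
    · filter_upwards with p
      rcases p with ⟨x, v⟩
      by_cases hp : 0 < x ∧ 2*v < x
      · have hfp : Function.uncurry f (x, v) = ψ x v := by
          rw [huf, indicator_of_mem (by exact hp)]
        rw [hfp, norm_eq_abs, abs_of_nonneg (by rw [hψ]; positivity)]
        have hb1 : ((2 * Real.cosh (x - v) * Real.cosh v)^n)⁻¹
            ≤ (2 * Real.cosh (x - v) * Real.cosh v)⁻¹ := by
          apply inv_anti₀ (hbase_pos x v)
          apply le_self_pow₀ _ (by omega)
          nlinarith [Real.one_le_cosh (x - v), Real.one_le_cosh v]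
        have hb2 : (Real.cosh (x - v))⁻¹ ≤ 2 * Real.exp (-2⁻¹ * x) := by
          refine (sech_le (x - v)).trans ?_
          have : Real.exp (-(x - v)) ≤ Real.exp (-2⁻¹ * x) := by
            apply Real.exp_le_exp.mpr; nlinarith [hp.2]
          linarith [this]
        have hcv := Real.cosh_pos v
        have hcxv := Real.cosh_pos (x - v)
        calc ψ x v = 2 * ((2 * Real.cosh (x - v) * Real.cosh v)^n)⁻¹ := by rw [hψ]
          _ ≤ 2 * (2 * Real.cosh (x - v) * Real.cosh v)⁻¹ := by linarith [hb1]
          _ = (Real.cosh (x - v))⁻¹ * (Real.cosh v)⁻¹ := by field_simp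
          _ ≤ (2 * Real.exp (-2⁻¹ * x)) * (Real.cosh v)⁻¹ := by
              apply mul_le_mul_of_nonneg_right hb2 (by positivity)
          _ ≤ ((Ioi (0:ℝ)).indicator (fun x => 4 * Real.exp (-2⁻¹ * x)) x) * (Real.cosh v)⁻¹ := by
              rw [indicator_of_mem (mem_Ioi.mpr hp.1)]
              have : (0:ℝ) < Real.exp (-2⁻¹ * x) := Real.exp_pos _
              apply mul_le_mul_of_nonneg_right (by linarith) (by positivity)
      · have hfp : Function.uncurry f (x, v) = 0 := by
          rw [huf, indicator_of_notMem (by exact hp)]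
        rw [hfp, norm_zero]
        apply mul_nonneg _ (by positivity)
        apply indicator_nonneg
        intro x _; positivity
  -- assemble
  set I0 : ℝ := ∫ w in Ioi (0:ℝ), ((Real.cosh w)^n)⁻¹ with hI0
  have habs : max (2:ℝ) 0 = 2 := by norm_num
  calc (∫ x in Ioi (0:ℝ), ∫ y in Ioi (0:ℝ), ((Real.cosh x + Real.cosh y)^n)⁻¹)
      = ∫ x in Ioi (0:ℝ), ∫ v in Iio (x/2), ψ x v := by
        exact setIntegral_congr_fun measurableSet_Ioi (fun x _ => step1 x)
    _ = ∫ x, (Ioi (0:ℝ)).indicator (fun x' => ∫ v in Iio (x'/2), ψ x' v) x :=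
        (integral_indicator measurableSet_Ioi).symm
    _ = ∫ x, ∫ v, f x v := by simp_rw [e_outer]
    _ = ∫ v, ∫ x, f x v := integral_integral_swap hIf
    _ = ∫ v, 2 * ((2:ℝ)^n)⁻¹ * ((Real.cosh v)^n)⁻¹ * (∫ w in Ioi |v|, ((Real.cosh w)^n)⁻¹) := by
        congr 1 with v
        simp_rw [e_inner v]
        rw [integral_indicator measurableSet_Ioi]
        have hsplit : ∀ x : ℝ, ψ x v
            = (2 * ((2:ℝ)^n)⁻¹ * ((Real.cosh v)^n)⁻¹) * ((Real.cosh (x - v))^n)⁻¹ := by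
          intro x
          rw [hψ]
          simp only
          rw [mul_pow, mul_pow, mul_inv, mul_inv]
          ring
        simp_rw [hsplit]
        rw [integral_const_mul]
        have hsub : ∀ x : ℝ, ((Real.cosh (x - v))^n)⁻¹
            = (fun w => ((Real.cosh w)^n)⁻¹) (x + (-v)) := by
          intro x; simp [sub_eq_add_neg]
        simp_rw [hsub]
        rw [integral_comp_add_right_Ioi' (fun w => ((Real.cosh w)^n)⁻¹) (max (2*v) 0) (-v)]
        have hmax : max (2*v) 0 + (-v) = |v| := by
          rcases le_total 0 v with h | h
          · rw [abs_of_nonneg h, max_eq_left (by linarith)]; ring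
          · rw [abs_of_nonpos h, max_eq_right (by linarith)]; ring
        rw [hmax]
    _ = ∫ v, (fun t => 2 * ((2:ℝ)^n)⁻¹ * ((Real.cosh t)^n)⁻¹
          * (∫ w in Ioi t, ((Real.cosh w)^n)⁻¹)) |v| := by
        refine integral_congr_ae (Filter.Eventually.of_forall fun v => ?_)
        simp only [Real.cosh_abs]
    _ = 2 * ∫ t in Ioi (0:ℝ), 2 * ((2:ℝ)^n)⁻¹ * ((Real.cosh t)^n)⁻¹
          * (∫ w in Ioi t, ((Real.cosh w)^n)⁻¹) :=
        integral_comp_abs (f := fun t => 2 * ((2:ℝ)^n)⁻¹ * ((Real.cosh t)^n)⁻¹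
          * (∫ w in Ioi t, ((Real.cosh w)^n)⁻¹))
    _ = 2 * (2 * ((2:ℝ)^n)⁻¹
          * ∫ t in Ioi (0:ℝ), ((Real.cosh t)^n)⁻¹ * (∫ w in Ioi t, ((Real.cosh w)^n)⁻¹)) := by
        have harr : ∀ t : ℝ, 2 * ((2:ℝ)^n)⁻¹ * ((Real.cosh t)^n)⁻¹
            * (∫ w in Ioi t, ((Real.cosh w)^n)⁻¹)
            = (2 * ((2:ℝ)^n)⁻¹) * (((Real.cosh t)^n)⁻¹
              * (∫ w in Ioi t, ((Real.cosh w)^n)⁻¹)) := fun t => by ring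
        simp_rw [harr]
        rw [integral_const_mul]
    _ = 2 * ((2:ℝ)^n)⁻¹ * I0^2 := by
        rw [G_main hn, hI0]
        ring


noncomputable def C₂ (k : ℕ) : ℝ :=
  (1 / 2) * ∫ x in Set.Ioi (0:ℝ), ∫ y in Set.Ioi (0:ℝ),
    1 / (Real.cosh x + Real.cosh y) ^ (k + 1)

theorem C2_recurrence (k : ℕ) :
    ((k : ℝ) + 1) ^ 2 * C₂ k = 4 * ((k : ℝ) + 2) ^ 2 * C₂ (k + 2) := by
  have hC : ∀ m : ℕ, C₂ m = ((2:ℝ)^(m+1))⁻¹ * (∫ w in Ioi (0:ℝ), ((Real.cosh w)^(m+1))⁻¹)^2 := by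
    intro m
    unfold C₂
    simp_rw [one_div]
    rw [double_eq (n := m+1) (by omega)]
    ring
  rw [hC k, hC (k+2)]
  set J : ℝ := ∫ w in Ioi (0:ℝ), ((Real.cosh w)^(k+1))⁻¹ with hJ
  set J' : ℝ := ∫ w in Ioi (0:ℝ), ((Real.cosh w)^(k+3))⁻¹ with hJ'
  have hidx : k + 2 + 1 = k + 3 := by omega
  rw [hidx]
  have hrec := sechpow_rec (n := k+1) (by omega)
  have hidx2 : k + 1 + 2 = k + 3 := by omega
  rw [hidx2] at hrec
  push_cast at hrec
  rw [← hJ, ← hJ'] at hrec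
  have hsq : (((k:ℝ)+1) * J)^2 = (((k:ℝ)+2) * J')^2 := by
    rw [hrec]; ring_nf
  have hp : ((2:ℝ)^(k+3))⁻¹ = ((2:ℝ)^(k+1))⁻¹ / 4 := by
    have h2 : ((2:ℝ)^(k+3)) = 2^(k+1) * 4 := by rw [pow_succ, pow_succ]; ring
    rw [h2]
    rw [mul_inv]
    ring
  rw [hp]
  linear_combination ((2:ℝ)^(k+1))⁻¹ * hsq
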